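/- Let n ≥ 1, p ≥ 2, let C ∈ ℝ^{n×n} be symmetric, and let ε ≥ 0. If V ∈ Ob(p,n) is an ε-approximate concave point of the problem max_{V ∈ Ob(p,n)} tr(C VᵀV), then tr(C VᵀV) ≥ SDP(C) − (1/(p−1))·(SDP(C) + SDP(−C)) − (n/2)·ε. -/

import Mathlib

open Matrix

/-- `SDP C` is the supremum of `tr(C X)` over all symmetric positive semidefinite
matrices `X` with unit diagonal. -/
noncomputable def SDP {n : ℕ} (C : Matrix (Fin n) (Fin n) ℝ) : ℝ :=
  sSup {t : ℝ | ∃ X : Matrix (Fin n) (Fin n) ℝ,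
    X.PosSemidef ∧ (∀ i, X i i = 1) ∧ t = (C * X).trace}

private lemma sum_comm3 {ι κ μ : Type*} [Fintype ι] [Fintype κ] [Fintype μ]
    (f : ι → κ → μ → ℝ) :
    ∑ a, ∑ b, ∑ c, f a b c = ∑ c, ∑ a, ∑ b, f a b c := by
  calc ∑ a, ∑ b, ∑ c, f a b c = ∑ a, ∑ c, ∑ b, f a b c :=
        Finset.sum_congr rfl fun a _ => Finset.sum_comm
    _ = ∑ c, ∑ a, ∑ b, f a b c := Finset.sum_comm

private lemma entry_bound {n : ℕ} {X : Matrix (Fin n) (Fin n) ℝ}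
    (hX : X.PosSemidef) (hd : ∀ i, X i i = 1) (i j : Fin n) : |X i j| ≤ 1 := by
  rcases eq_or_ne i j with rfl | hij
  · rw [hd i]; norm_num
  · have hsym : X j i = X i j := by
      have h := congrFun (congrFun hX.1 i) j
      simpa [Matrix.conjTranspose_apply] using h
    have key : ∀ c : ℝ, 0 ≤ 1 + c^2 + 2 * c * X i j := by
      intro c
      have h := hX.dotProduct_mulVec_nonneg (fun m => (if m = i then 1 else 0) + (if m = j then c else 0))
      have hv : ((fun m => (if m = i then (1:ℝ) else 0) + (if m = j then c else 0)) ⬝ᵥ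
          (X *ᵥ fun m => (if m = i then (1:ℝ) else 0) + (if m = j then c else 0)))
          = 1 + c^2 + 2 * c * X i j := by
        simp only [dotProduct, Matrix.mulVec, dotProduct]
        simp only [mul_add, add_mul, Finset.sum_add_distrib, Finset.mul_sum]
        simp [Finset.sum_ite_eq', Finset.mul_sum, mul_comm, mul_ite, ite_mul, hd, hsym, hij]
        ring
      rw [show star (fun m => (if m = i then (1:ℝ) else 0) + (if m = j then c else 0))
          = (fun m => (if m = i then (1:ℝ) else 0) + (if m = j then c else 0)) from rfl] at h
      rw [hv] at h
      exact h
    have h1 := key 1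
    have h2 := key (-1)
    rw [abs_le]; constructor <;> nlinarith

private lemma sdp_bddAbove {n : ℕ} (C : Matrix (Fin n) (Fin n) ℝ) :
    BddAbove {t : ℝ | ∃ X : Matrix (Fin n) (Fin n) ℝ,
      X.PosSemidef ∧ (∀ i, X i i = 1) ∧ t = (C * X).trace} := by
  refine ⟨∑ i, ∑ j, |C i j|, fun t ht => ?_⟩
  obtain ⟨X, hX, hd, rfl⟩ := ht
  have htr : (C * X).trace = ∑ i, ∑ j, C i j * X j i := by
    simp [Matrix.trace, Matrix.mul_apply, Matrix.diag]
  rw [htr]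
  refine Finset.sum_le_sum fun i _ => Finset.sum_le_sum fun j _ => ?_
  calc C i j * X j i ≤ |C i j * X j i| := le_abs_self _
    _ = |C i j| * |X j i| := abs_mul _ _
    _ ≤ |C i j| * 1 := mul_le_mul_of_nonneg_left (entry_bound hX hd j i) (abs_nonneg _)
    _ = |C i j| := mul_one _

private lemma key_sum {n p : ℕ} (V : Matrix (Fin p) (Fin n) ℝ)
    (hV : ∀ i, ∑ j, (V j i) ^ 2 = 1) (i i' : Fin n) :
    ∑ k, ∑ j, (((if j = k then (1:ℝ) else 0) - V j i * V k i) *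
        ((if j = k then (1:ℝ) else 0) - V j i' * V k i'))
      = (p:ℝ) - 2 + (∑ j, V j i * V j i') ^ 2 := by
  have inner : ∀ k, ∑ j, (((if j = k then (1:ℝ) else 0) - V j i * V k i) *
        ((if j = k then (1:ℝ) else 0) - V j i' * V k i'))
      = 1 - V k i * V k i - V k i' * V k i'
        + (∑ j, V j i * V j i') * (V k i * V k i') := by
    intro k
    have expand : ∀ j ∈ Finset.univ, (((if j = k then (1:ℝ) else 0) - V j i * V k i) *
        ((if j = k then (1:ℝ) else 0) - V j i' * V k i'))
        = (if j = k then (1:ℝ) else 0) - (if j = k then V j i' * V k i' else 0)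
          - (if j = k then V j i * V k i else 0)
          + (V j i * V j i') * (V k i * V k i') := by
      intro j _
      by_cases h : j = k <;> simp [h] <;> ring
    rw [Finset.sum_congr rfl expand]
    simp only [Finset.sum_add_distrib, Finset.sum_sub_distrib,
      Finset.sum_ite_eq' Finset.univ k, Finset.mem_univ, if_true, ← Finset.sum_mul]
    ring
  rw [Finset.sum_congr rfl fun k _ => inner k]
  have h1 : ∑ k, V k i * V k i = 1 := by simpa [pow_two] using hV i
  have h2 : ∑ k, V k i' * V k i' = 1 := by simpa [pow_two] using hV i'
  simp only [Finset.sum_add_distrib, Finset.sum_sub_distrib, Finset.sum_const,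
    Finset.card_univ, Fintype.card_fin, nsmul_eq_mul, mul_one, h1, h2, ← Finset.mul_sum]
  have h3 : ∑ k, V k i * V k i' = ∑ j, V j i * V j i' := rfl
  rw [h3]
  ring

/-- Approximation quality of an ε-approximate concave point of the oblique-manifold
relaxation of the max-cut SDP. -/
theorem approx_concave_point_bound {n p : ℕ} (hn : 1 ≤ n) (hp : 2 ≤ p)
    (C : Matrix (Fin n) (Fin n) ℝ) (hC : C.IsSymm) (ε : ℝ) (hε : 0 ≤ ε)
    (V : Matrix (Fin p) (Fin n) ℝ)
    (hV : ∀ i, ∑ j, (V j i) ^ 2 = 1)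
    (hconc : ∀ U : Matrix (Fin p) (Fin n) ℝ,
      (∀ i, ∑ j, V j i * U j i = 0) →
      2 * (C * (Uᵀ * U)).trace - 2 * ∑ i, (Vᵀ * V * C) i i * (∑ j, (U j i) ^ 2)
        ≤ ε * ∑ j, ∑ i, (U j i) ^ 2) :
    (C * (Vᵀ * V)).trace
      ≥ SDP C - (1 / ((p : ℝ) - 1)) * (SDP C + SDP (-C)) - ((n : ℝ) / 2) * ε := by
  classical
  have hp' : (2:ℝ) ≤ (p:ℝ) := by exact_mod_cast hp
  have hq : (0:ℝ) < (p:ℝ) - 1 := by linarith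
  have hp2 : (0:ℝ) ≤ (p:ℝ) - 2 := by linarith
  set f : ℝ := (C * (Vᵀ * V)).trace with hfdef
  have hGapp : ∀ i i', (Vᵀ * V) i i' = ∑ j, V j i * V j i' := by
    intro i i'; simp [Matrix.mul_apply]
  have hGdiag : ∀ i, (Vᵀ * V) i i = 1 := by
    intro i
    rw [hGapp i i]
    simpa [pow_two] using hV i
  have hGpsd : (Vᵀ * V).PosSemidef := by
    have h := Matrix.posSemidef_conjTranspose_mul_self V
    rwa [Matrix.conjTranspose_eq_transpose_of_trivial] at h
  -- - f ≤ SDP (-C)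
  have hmf : -f ≤ SDP (-C) := by
    have hmem : -f ∈ {t : ℝ | ∃ X : Matrix (Fin n) (Fin n) ℝ,
        X.PosSemidef ∧ (∀ i, X i i = 1) ∧ t = ((-C) * X).trace} := by
      refine ⟨Vᵀ * V, hGpsd, hGdiag, ?_⟩
      rw [Matrix.neg_mul, Matrix.trace_neg, hfdef]
    exact le_csSup (sdp_bddAbove (-C)) hmem
  -- the key inequality for every feasible X
  have key : ∀ X : Matrix (Fin n) (Fin n) ℝ, X.PosSemidef → (∀ i, X i i = 1) →
      ((p:ℝ) - 2) * (C * X).trace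
        ≤ ((p:ℝ) - 1) * f + ((p:ℝ) - 1) * (((n:ℝ)/2) * ε) + SDP (-C) := by
    intro X hX hXd
    obtain ⟨B, hB⟩ : ∃ B : Matrix (Fin n) (Fin n) ℝ, X = Bᴴ * B := by
      open scoped MatrixOrder in
      exact ⟨CFC.sqrt X, by
        rw [← Matrix.star_eq_conjTranspose, (CFC.sqrt_nonneg X).isSelfAdjoint.star_eq, CFC.sqrt_mul_sqrt_self X hX.nonneg]⟩
    have hXapp : ∀ i i', X i i' = ∑ l, B l i * B l i' := by
      intro i i'; rw [hB]; simp [Matrix.mul_apply, Matrix.conjTranspose_apply]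
    set U : Fin p → Fin n → Matrix (Fin p) (Fin n) ℝ :=
      fun k l => Matrix.of fun j i =>
        B l i * ((if j = k then (1:ℝ) else 0) - V j i * V k i) with hUdef
    have hU : ∀ k l j i, U k l j i
        = B l i * ((if j = k then (1:ℝ) else 0) - V j i * V k i) := fun _ _ _ _ => rfl
    -- tangency
    have tangent : ∀ k l i, ∑ j, V j i * U k l j i = 0 := by
      intro k l i
      have hterm : ∀ j ∈ Finset.univ, V j i * U k l j i
          = B l i * ((if j = k then V j i else 0) - (V j i)^2 * V k i) := by
        intro j _
        rw [hU]
        by_cases h : j = k <;> simp [h] <;> ring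
      rw [Finset.sum_congr rfl hterm, ← Finset.mul_sum, Finset.sum_sub_distrib,
        Finset.sum_ite_eq' Finset.univ k, ← Finset.sum_mul, hV i]
      simp
    -- the core sum identity
    have core : ∀ i i', ∑ k, ∑ l, ∑ j, U k l j i * U k l j i'
        = X i i' * ((p:ℝ) - 2 + ((Vᵀ * V) i i')^2) := by
      intro i i'
      have h1 : ∀ k l, (∑ j, U k l j i * U k l j i') = (B l i * B l i') *
          ∑ j, (((if j = k then (1:ℝ) else 0) - V j i * V k i) *
            ((if j = k then (1:ℝ) else 0) - V j i' * V k i')) := by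
        intro k l
        rw [Finset.mul_sum]
        exact Finset.sum_congr rfl fun j _ => by rw [hU, hU]; ring
      calc ∑ k, ∑ l, ∑ j, U k l j i * U k l j i'
          = ∑ k, (∑ l, B l i * B l i') *
            (∑ j, (((if j = k then (1:ℝ) else 0) - V j i * V k i) *
              ((if j = k then (1:ℝ) else 0) - V j i' * V k i'))) := by
            refine Finset.sum_congr rfl fun k _ => ?_
            rw [Finset.sum_congr rfl fun l _ => h1 k l, ← Finset.sum_mul]
        _ = (∑ l, B l i * B l i') * ∑ k,
            (∑ j, (((if j = k then (1:ℝ) else 0) - V j i * V k i) *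
              ((if j = k then (1:ℝ) else 0) - V j i' * V k i'))) := by
            rw [← Finset.mul_sum]
        _ = X i i' * ((p:ℝ) - 2 + ((Vᵀ * V) i i')^2) := by
            rw [key_sum V hV i i', ← hXapp, ← hGapp]
    have corediag : ∀ i, ∑ k, ∑ l, ∑ j, (U k l j i)^2 = (p:ℝ) - 1 := by
      intro i
      have h : ∑ k, ∑ l, ∑ j, (U k l j i)^2 = ∑ k, ∑ l, ∑ j, U k l j i * U k l j i := by
        simp [pow_two]
      rw [h, core i i, hXd i, hGdiag i]
      ring
    -- sum the concavity inequality over all k, l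
    have hsum : ∑ k, ∑ l, (2 * (C * ((U k l)ᵀ * U k l)).trace
          - 2 * ∑ i, (Vᵀ * V * C) i i * (∑ j, (U k l j i) ^ 2))
        ≤ ∑ k, ∑ l, (ε * ∑ j, ∑ i, (U k l j i) ^ 2) :=
      Finset.sum_le_sum fun k _ => Finset.sum_le_sum fun l _ =>
        hconc (U k l) (tangent k l)
    simp only [Finset.sum_sub_distrib, ← Finset.mul_sum] at hsum
    -- compute the three totals
    set Zmat : Matrix (Fin n) (Fin n) ℝ :=
      Matrix.of (fun i i' => X i i' * ((Vᵀ * V) i i')^2) with hZdef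
    have hM : (∑ k, ∑ l, ((U k l)ᵀ * U k l))
        = Matrix.of fun i i' => X i i' * ((p:ℝ) - 2 + ((Vᵀ * V) i i')^2) := by
      ext i i'
      simp only [Matrix.sum_apply, Matrix.of_apply, Matrix.mul_apply,
        Matrix.transpose_apply]
      exact core i i'
    have hT1 : ∑ k, ∑ l, (C * ((U k l)ᵀ * U k l)).trace
        = ((p:ℝ) - 2) * (C * X).trace + (C * Zmat).trace := by
      have e1 : ∑ k, ∑ l, (C * ((U k l)ᵀ * U k l)).trace
          = (C * (∑ k, ∑ l, ((U k l)ᵀ * U k l))).trace := by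
        simp only [Finset.mul_sum, Matrix.trace_sum]
      rw [e1, hM]
      simp only [Matrix.trace, Matrix.diag, Matrix.mul_apply, Matrix.of_apply,
        Finset.mul_sum, hZdef]
      rw [← Finset.sum_add_distrib]
      refine Finset.sum_congr rfl fun i _ => ?_
      rw [← Finset.sum_add_distrib]
      exact Finset.sum_congr rfl fun i' _ => by ring
    have hT2 : ∑ k, ∑ l, ∑ i, (Vᵀ * V * C) i i * (∑ j, (U k l j i) ^ 2)
        = ((p:ℝ) - 1) * f := by
      rw [sum_comm3 (fun k l i => (Vᵀ * V * C) i i * (∑ j, (U k l j i)^2))]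
      have h : ∀ i, ∑ k, ∑ l, (Vᵀ * V * C) i i * (∑ j, (U k l j i)^2)
          = (Vᵀ * V * C) i i * ((p:ℝ) - 1) := by
        intro i
        simp only [← Finset.mul_sum]
        rw [corediag i]
      rw [Finset.sum_congr rfl fun i _ => h i, ← Finset.sum_mul]
      have htr : ∑ i, (Vᵀ * V * C) i i = f := by
        have : ∑ i, (Vᵀ * V * C) i i = (Vᵀ * V * C).trace := by
          simp [Matrix.trace, Matrix.diag]
        rw [this, Matrix.trace_mul_comm, hfdef]
      rw [htr]; ring
    have hT3 : ∑ k, ∑ l, ∑ j, ∑ i, (U k l j i) ^ 2 = ((p:ℝ) - 1) * n := by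
      have hswap : ∀ k l, ∑ j, ∑ i, (U k l j i)^2 = ∑ i, ∑ j, (U k l j i)^2 :=
        fun k l => Finset.sum_comm
      rw [Finset.sum_congr rfl fun k _ => Finset.sum_congr rfl fun l _ => hswap k l,
        sum_comm3 (fun k l i => ∑ j, (U k l j i)^2),
        Finset.sum_congr rfl fun i _ => corediag i]
      simp [Finset.sum_const, Finset.card_univ, mul_comm]
      ring
    -- the Hadamard-product matrix is feasible
    have hZW : Zmat = (Matrix.of fun (q : Fin n × Fin p × Fin p) i =>
        B q.1 i * V q.2.1 i * V q.2.2 i)ᵀ *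
        (Matrix.of fun (q : Fin n × Fin p × Fin p) i =>
        B q.1 i * V q.2.1 i * V q.2.2 i) := by
      ext i i'
      simp only [Matrix.mul_apply, Matrix.transpose_apply, Matrix.of_apply,
        Fintype.sum_prod_type, hZdef]
      have hrow : ∀ l, ∑ j, ∑ j', (B l i * V j i * V j' i) * (B l i' * V j i' * V j' i')
          = (B l i * B l i') * ((∑ j, V j i * V j i') * (∑ j, V j i * V j i')) := by
        intro l
        calc ∑ j, ∑ j', (B l i * V j i * V j' i) * (B l i' * V j i' * V j' i')
            = ∑ j, (B l i * B l i' * (V j i * V j i')) * (∑ j', V j' i * V j' i') := by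
              refine Finset.sum_congr rfl fun j _ => ?_
              rw [Finset.mul_sum]
              exact Finset.sum_congr rfl fun j' _ => by ring
          _ = (∑ j, B l i * B l i' * (V j i * V j i')) * (∑ j', V j' i * V j' i') :=
              (Finset.sum_mul _ _ _).symm
          _ = (B l i * B l i') * ((∑ j, V j i * V j i') * (∑ j, V j i * V j i')) := by
              rw [← Finset.mul_sum]; ring
      rw [Finset.sum_congr rfl fun l _ => hrow l, ← Finset.sum_mul, hXapp i i']
      ring
    have hZpsd : Zmat.PosSemidef := by
      rw [hZW]
      have h := Matrix.posSemidef_conjTranspose_mul_self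
        (Matrix.of fun (q : Fin n × Fin p × Fin p) i => B q.1 i * V q.2.1 i * V q.2.2 i)
      rwa [Matrix.conjTranspose_eq_transpose_of_trivial] at h
    have hZdiag : ∀ i, Zmat i i = 1 := by
      intro i
      simp only [hZdef, Matrix.of_apply, hXd i, hGdiag i]
      norm_num
    have hZle : -(SDP (-C)) ≤ (C * Zmat).trace := by
      have hmem : ((-C) * Zmat).trace ∈ {t : ℝ | ∃ X : Matrix (Fin n) (Fin n) ℝ,
          X.PosSemidef ∧ (∀ i, X i i = 1) ∧ t = ((-C) * X).trace} :=
        ⟨Zmat, hZpsd, hZdiag, rfl⟩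
      have h : ((-C) * Zmat).trace ≤ SDP (-C) := le_csSup (sdp_bddAbove (-C)) hmem
      rw [Matrix.neg_mul, Matrix.trace_neg] at h
      linarith
    rw [hT1, hT2, hT3] at hsum
    have hrw : ε * (((p:ℝ) - 1) * n) = 2 * (((p:ℝ) - 1) * (((n:ℝ)/2) * ε)) := by ring
    rw [hrw] at hsum
    linarith
  -- conclude
  have hne : Set.Nonempty {t : ℝ | ∃ X : Matrix (Fin n) (Fin n) ℝ,
      X.PosSemidef ∧ (∀ i, X i i = 1) ∧ t = (C * X).trace} :=
    ⟨(C * 1).trace, 1, Matrix.PosSemidef.one, fun i => Matrix.one_apply_eq i, rfl⟩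
  have hsdpC : ((p:ℝ) - 2) * SDP C
      ≤ ((p:ℝ) - 1) * f + ((p:ℝ) - 1) * (((n:ℝ)/2) * ε) + SDP (-C) := by
    rcases eq_or_lt_of_le hp2 with h | h
    · have hp1 : (p:ℝ) - 1 = 1 := by linarith
      rw [← h, hp1, zero_mul, one_mul, one_mul]
      have hn2 : (0:ℝ) ≤ ((n:ℝ)/2) * ε := by positivity
      linarith
    · have hsup : SDP C ≤ (((p:ℝ) - 1) * f + ((p:ℝ) - 1) * (((n:ℝ)/2) * ε) + SDP (-C))
          / ((p:ℝ) - 2) := by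
        apply csSup_le hne
        intro t ht
        obtain ⟨X, hX1, hX2, rfl⟩ := ht
        rw [le_div_iff₀ h]
        have := key X hX1 hX2
        linarith [mul_comm ((C * X).trace) ((p:ℝ) - 2)]
      calc ((p:ℝ) - 2) * SDP C
          ≤ ((p:ℝ) - 2) * ((((p:ℝ) - 1) * f + ((p:ℝ) - 1) * (((n:ℝ)/2) * ε) + SDP (-C))
            / ((p:ℝ) - 2)) := mul_le_mul_of_nonneg_left hsup (le_of_lt h)
        _ = ((p:ℝ) - 1) * f + ((p:ℝ) - 1) * (((n:ℝ)/2) * ε) + SDP (-C) := by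
            field_simp
  have heq : SDP C - (1 / ((p:ℝ) - 1)) * (SDP C + SDP (-C)) - ((n:ℝ) / 2) * ε
      = (((p:ℝ) - 2) * SDP C - SDP (-C) - ((p:ℝ) - 1) * (((n:ℝ)/2) * ε)) / ((p:ℝ) - 1) := by
    field_simp
    ring
  rw [ge_iff_le, heq, div_le_iff₀ hq]
  have hcomm : f * ((p:ℝ) - 1) = ((p:ℝ) - 1) * f := mul_comm _ _
  linarith
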